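/- Let V₁ ~ Gamma(p, 1/σ₁) and V₂ ~ Gamma(q, 1/σ₂) be independent, with p, q ≥ 2 integers and σ₁ ≤ σ₂ unknown. Consider estimating σ₁ under quadratic loss L(δ/σ₁) = (δ/σ₁ − 1)². Let δ₀ = V₁/(p+1) and define δ_S = min{V₁/(p+1), (V₁+V₂)/(p+q+1)}. Then R(σ, δ_S) ≤ R(σ, δ₀) for all σ₁ ≤ σ₂, with strict inequality for some parameter values. -/

import Mathlib

open MeasureTheory Set Real

lemma gammaIntOn (n : ℕ) {l : ℝ} (hl : 0 < l) :
    IntegrableOn (fun x : ℝ => x ^ n * Real.exp (-l * x)) (Ioi 0) := by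
  have h := integrableOn_rpow_mul_exp_neg_mul_rpow (s := (n:ℝ)) (p := 1)
    (by exact_mod_cast neg_one_lt_zero.trans_le n.cast_nonneg) one_pos hl
  refine h.congr_fun (fun x hx => ?_) measurableSet_Ioi
  beta_reduce; rw [Real.rpow_one, Real.rpow_natCast]

lemma gammaInt (n : ℕ) {l : ℝ} (hl : 0 < l) :
    ∫ x in Ioi (0:ℝ), x ^ n * Real.exp (-l * x) = n.factorial / l ^ (n + 1) := by
  have h := Real.integral_rpow_mul_exp_neg_mul_Ioi (a := (n:ℝ)+1) (r := l)
    (by positivity) hl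
  rw [show ((n:ℝ)+1-1) = (n:ℝ) by ring] at h
  have e : ∫ x in Ioi (0:ℝ), x ^ n * Real.exp (-l * x)
      = ∫ x in Ioi (0:ℝ), x ^ ((n:ℝ)) * Real.exp (-(l * x)) := by
    refine setIntegral_congr_fun measurableSet_Ioi (fun x hx => ?_)
    rw [Real.rpow_natCast, neg_mul]
  rw [e, h, Real.Gamma_nat_eq_factorial,
    show ((n:ℝ)+1) = ((n+1:ℕ):ℝ) by push_cast; ring, Real.rpow_natCast, div_pow, one_pow]
  ring

lemma KIntOn (m : ℕ) (hm : 1 ≤ m) (a : ℝ) {l : ℝ} (hl : 0 < l) :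
    IntegrableOn (fun v : ℝ => (a*v - 1)^2 * (v^(m-1) * Real.exp (-l*v))) (Ioi 0) := by
  have h : IntegrableOn (fun v : ℝ =>
      a^2 * (v^(m+1) * Real.exp (-l*v)) - 2*a*(v^m * Real.exp (-l*v))
        + v^(m-1) * Real.exp (-l*v)) (Ioi 0) :=
    (((gammaIntOn (m+1) hl).const_mul _).sub ((gammaIntOn m hl).const_mul _)).add
      (gammaIntOn (m-1) hl)
  refine h.congr_fun (fun v _ => ?_) measurableSet_Ioi
  have h1 : v^(m+1) = v^(m-1) * v^2 := by rw [← pow_add]; congr 1; omega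
  have h2 : v^m = v^(m-1) * v := by rw [← pow_succ]; congr 1; omega
  beta_reduce; rw [h1, h2]; ring

lemma Kval (m : ℕ) (hm : 1 ≤ m) (a : ℝ) {l : ℝ} (hl : 0 < l) :
    ∫ v in Ioi (0:ℝ), (a*v - 1)^2 * (v^(m-1) * Real.exp (-l*v)) =
      a^2 * ((m+1).factorial / l^(m+2)) - 2*a*(m.factorial / l^(m+1))
        + (m-1).factorial / l^m := by
  have e : ∀ v ∈ Ioi (0:ℝ), (a*v - 1)^2 * (v^(m-1) * Real.exp (-l*v))
      = a^2 * (v^(m+1) * Real.exp (-l*v)) - 2*a*(v^m * Real.exp (-l*v))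
        + v^(m-1) * Real.exp (-l*v) := by
    intro v _
    have h1 : v^(m+1) = v^(m-1) * v^2 := by rw [← pow_add]; congr 1; omega
    have h2 : v^m = v^(m-1) * v := by rw [← pow_succ]; congr 1; omega
    rw [h1, h2]; ring
  have i2 : IntegrableOn (fun v : ℝ => a^2 * (v^(m+1) * Real.exp (-l*v))) (Ioi 0) :=
    (gammaIntOn (m+1) hl).const_mul _
  have i1 : IntegrableOn (fun v : ℝ => 2*a * (v^m * Real.exp (-l*v))) (Ioi 0) :=
    (gammaIntOn m hl).const_mul _
  have i12 : IntegrableOn (fun v : ℝ => a^2 * (v^(m+1) * Real.exp (-l*v))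
      - 2*a*(v^m * Real.exp (-l*v))) (Ioi 0) := i2.sub i1
  rw [setIntegral_congr_fun measurableSet_Ioi e,
    integral_add i12 (gammaIntOn (m-1) hl), integral_sub i2 i1,
    integral_const_mul, integral_const_mul, gammaInt _ hl, gammaInt _ hl, gammaInt _ hl]
  have h3 : m - 1 + 1 = m := by omega
  rw [h3]

lemma Kle (m : ℕ) (hm : 1 ≤ m) {a b l : ℝ} (hl : 0 < l) (hba : b ≤ a)
    (hb : l/((m:ℝ)+1) ≤ b) :
    (∫ v in Ioi (0:ℝ), (b*v - 1)^2 * (v^(m-1) * Real.exp (-l*v))) ≤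
      ∫ v in Ioi (0:ℝ), (a*v - 1)^2 * (v^(m-1) * Real.exp (-l*v)) := by
  rw [Kval m hm a hl, Kval m hm b hl]
  have hf : ((m+1).factorial : ℝ) = ((m:ℝ)+1) * m.factorial := by
    rw [Nat.factorial_succ]; push_cast; ring
  have hF : (0:ℝ) < m.factorial := by exact_mod_cast m.factorial_pos
  have hp1 : (0:ℝ) < l^(m+1) := by positivity
  have hl2 : l^(m+2) = l^(m+1) * l := pow_succ l (m+1)
  have hm1 : (0:ℝ) < (m:ℝ)+1 := by positivity
  have key : 2 * l ≤ ((m:ℝ)+1) * (a+b) := by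
    rw [div_le_iff₀ hm1] at hb
    nlinarith
  have key2 : 2 * ((m.factorial:ℝ) / l^(m+1)) ≤ (a+b) * ((m+1).factorial / l^(m+2)) := by
    rw [hf, hl2, show 2 * ((m.factorial:ℝ) / l^(m+1)) = (2*(m.factorial:ℝ))/l^(m+1) by ring,
      show (a+b) * (((m:ℝ)+1) * m.factorial / (l^(m+1) * l)) = ((a+b)*(((m:ℝ)+1)*m.factorial))/(l^(m+1)*l) by ring,
      div_le_div_iff₀ hp1 (by positivity)]
    nlinarith [mul_le_mul_of_nonneg_right key (le_of_lt (mul_pos hF hp1))]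
  nlinarith [mul_nonneg (sub_nonneg.2 hba) (sub_nonneg.2 key2)]

lemma Klt (m : ℕ) (hm : 1 ≤ m) {a b l : ℝ} (hl : 0 < l) (hba : b < a)
    (hb : l/((m:ℝ)+1) ≤ b) :
    (∫ v in Ioi (0:ℝ), (b*v - 1)^2 * (v^(m-1) * Real.exp (-l*v))) <
      ∫ v in Ioi (0:ℝ), (a*v - 1)^2 * (v^(m-1) * Real.exp (-l*v)) := by
  rw [Kval m hm a hl, Kval m hm b hl]
  have hf : ((m+1).factorial : ℝ) = ((m:ℝ)+1) * m.factorial := by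
    rw [Nat.factorial_succ]; push_cast; ring
  have hF : (0:ℝ) < m.factorial := by exact_mod_cast m.factorial_pos
  have hp1 : (0:ℝ) < l^(m+1) := by positivity
  have hl2 : l^(m+2) = l^(m+1) * l := pow_succ l (m+1)
  have hm1 : (0:ℝ) < (m:ℝ)+1 := by positivity
  have key : 2 * l < ((m:ℝ)+1) * (a+b) := by
    rw [div_le_iff₀ hm1] at hb
    nlinarith
  have key2 : 2 * ((m.factorial:ℝ) / l^(m+1)) < (a+b) * ((m+1).factorial / l^(m+2)) := by
    rw [hf, hl2, show 2 * ((m.factorial:ℝ) / l^(m+1)) = (2*(m.factorial:ℝ))/l^(m+1) by ring,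
      show (a+b) * (((m:ℝ)+1) * m.factorial / (l^(m+1) * l)) = ((a+b)*(((m:ℝ)+1)*m.factorial))/(l^(m+1)*l) by ring,
      div_lt_div_iff₀ hp1 (by positivity)]
    nlinarith [mul_lt_mul_of_pos_right key (mul_pos hF hp1)]
  nlinarith [mul_pos (sub_pos.2 hba) (sub_pos.2 key2)]

noncomputable def covMap : ℝ × ℝ → ℝ × ℝ := fun x => (x.2, x.1 * x.2)

noncomputable def covDeriv (x : ℝ × ℝ) : ℝ × ℝ →L[ℝ] ℝ × ℝ :=
  (ContinuousLinearMap.snd ℝ ℝ ℝ).prod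
    (x.1 • ContinuousLinearMap.snd ℝ ℝ ℝ + x.2 • ContinuousLinearMap.fst ℝ ℝ ℝ)

lemma covMap_hasFDeriv (x : ℝ × ℝ) : HasFDerivAt covMap (covDeriv x) x := by
  have h1 : HasFDerivAt (fun y : ℝ × ℝ => y.2) (ContinuousLinearMap.snd ℝ ℝ ℝ) x :=
    hasFDerivAt_snd
  have h2 : HasFDerivAt (fun y : ℝ × ℝ => y.1 * y.2)
      (x.1 • ContinuousLinearMap.snd ℝ ℝ ℝ + x.2 • ContinuousLinearMap.fst ℝ ℝ ℝ) x :=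
    hasFDerivAt_fst.mul hasFDerivAt_snd
  exact h1.prodMk h2

lemma covDeriv_det (x : ℝ × ℝ) : (covDeriv x).det = -x.2 := by
  have : (covDeriv x).det = LinearMap.det ((covDeriv x) : ℝ × ℝ →ₗ[ℝ] ℝ × ℝ) := rfl
  rw [this, ← LinearMap.det_toMatrix (Module.Basis.finTwoProd ℝ), Matrix.det_fin_two]
  simp [LinearMap.toMatrix_apply, covDeriv, Module.Basis.finTwoProd_zero, Module.Basis.finTwoProd_one,
    Module.Basis.coe_finTwoProd_repr]
lemma covMap_image : covMap '' (Ioi (0:ℝ) ×ˢ Ioi (0:ℝ)) = Ioi (0:ℝ) ×ˢ Ioi (0:ℝ) := by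
  ext ⟨a, b⟩
  simp only [covMap, mem_image, mem_prod, mem_Ioi, Prod.mk.injEq, Prod.exists]
  constructor
  · rintro ⟨z, v, ⟨hz, hv⟩, rfl, rfl⟩
    exact ⟨hv, mul_pos hz hv⟩
  · rintro ⟨ha, hb⟩
    exact ⟨b / a, a, ⟨div_pos hb ha, ha⟩, rfl, by field_simp⟩

lemma covMap_inj : InjOn covMap (Ioi (0:ℝ) ×ˢ Ioi (0:ℝ)) := by
  rintro ⟨z, v⟩ ⟨hz, hv⟩ ⟨z', v'⟩ ⟨hz', hv'⟩ h
  simp only [covMap, Prod.mk.injEq] at h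
  obtain ⟨rfl, h2⟩ := h
  simp only [mem_Ioi] at hv
  exact Prod.ext (mul_right_cancel₀ (ne_of_gt hv) h2) rfl

lemma cov (G : ℝ × ℝ → ℝ) (hG : IntegrableOn G (Ioi (0:ℝ) ×ˢ Ioi (0:ℝ))) :
    ((∫ v in Ioi (0:ℝ) ×ˢ Ioi (0:ℝ), G v) =
      ∫ z in Ioi (0:ℝ), ∫ v in Ioi (0:ℝ), v * G (v, z * v)) ∧
    IntegrableOn (fun z => ∫ v in Ioi (0:ℝ), v * G (v, z * v)) (Ioi (0:ℝ)) := by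
  have hs : MeasurableSet (Ioi (0:ℝ) ×ˢ Ioi (0:ℝ)) :=
    measurableSet_Ioi.prod measurableSet_Ioi
  have hd : ∀ x ∈ Ioi (0:ℝ) ×ˢ Ioi (0:ℝ),
      HasFDerivWithinAt covMap (covDeriv x) (Ioi (0:ℝ) ×ˢ Ioi (0:ℝ)) x :=
    fun x _ => (covMap_hasFDeriv x).hasFDerivWithinAt
  have key := integral_image_eq_integral_abs_det_fderiv_smul volume hs hd covMap_inj G
  rw [covMap_image] at key
  have hint : IntegrableOn (fun x : ℝ × ℝ => |(covDeriv x).det| • G (covMap x))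
      (Ioi (0:ℝ) ×ˢ Ioi (0:ℝ)) := by
    rw [← integrableOn_image_iff_integrableOn_abs_det_fderiv_smul volume hs hd covMap_inj G]
    rwa [covMap_image]
  have hint' : Integrable (fun x : ℝ × ℝ => |(covDeriv x).det| • G (covMap x))
      ((volume.restrict (Ioi (0:ℝ))).prod (volume.restrict (Ioi (0:ℝ)))) := by
    rwa [Measure.prod_restrict]
  have hpt : ∀ z : ℝ, (∫ v in Ioi (0:ℝ),
        |(covDeriv (z, v)).det| • G (covMap (z, v))) = ∫ v in Ioi (0:ℝ), v * G (v, z * v) := by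
    intro z
    refine setIntegral_congr_fun measurableSet_Ioi (fun v hv => ?_)
    simp only [covDeriv_det, covMap, abs_neg, abs_of_pos (mem_Ioi.mp hv), smul_eq_mul]
  constructor
  · rw [key, Measure.volume_eq_prod, MeasureTheory.setIntegral_prod _ hint]
    exact setIntegral_congr_fun measurableSet_Ioi (fun z _ => hpt z)
  · have := hint'.integral_prod_left
    refine this.congr (Filter.Eventually.of_forall (fun z => ?_))
    exact hpt z

lemma red (p q : ℕ) (hp : 1 ≤ p) (hq : 1 ≤ q) {s t : ℝ}
    (φ : ℝ → ℝ) (G : ℝ × ℝ → ℝ) (hG : IntegrableOn G (Ioi (0:ℝ) ×ˢ Ioi (0:ℝ)))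
    (hid : ∀ z ∈ Ioi (0:ℝ), ∀ v ∈ Ioi (0:ℝ), v * G (v, z * v)
      = z^(q-1) * ((φ z * v - 1)^2 * (v^(p+q-1) * Real.exp (-(1/s + z/t) * v)))) :
    ((∫ v in Ioi (0:ℝ) ×ˢ Ioi (0:ℝ), G v)
      = ∫ z in Ioi (0:ℝ), z^(q-1) *
          ∫ v in Ioi (0:ℝ), (φ z * v - 1)^2 * (v^(p+q-1) * Real.exp (-(1/s + z/t) * v)))
    ∧ IntegrableOn (fun z => z^(q-1) *
        ∫ v in Ioi (0:ℝ), (φ z * v - 1)^2 * (v^(p+q-1) * Real.exp (-(1/s + z/t) * v)))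
        (Ioi (0:ℝ)) := by
  obtain ⟨heq, hint⟩ := cov G hG
  have hpt : ∀ z ∈ Ioi (0:ℝ), (∫ v in Ioi (0:ℝ), v * G (v, z * v))
      = z^(q-1) * ∫ v in Ioi (0:ℝ),
          (φ z * v - 1)^2 * (v^(p+q-1) * Real.exp (-(1/s + z/t) * v)) := by
    intro z hz
    rw [← integral_const_mul]
    exact setIntegral_congr_fun measurableSet_Ioi (fun v hv => hid z hz v hv)
  constructor
  · rw [heq]
    exact setIntegral_congr_fun measurableSet_Ioi hpt
  · exact hint.congr_fun hpt measurableSet_Ioi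

noncomputable def Gfun (p q : ℕ) (s t : ℝ) (δ : ℝ → ℝ → ℝ) : ℝ × ℝ → ℝ := fun v =>
  (δ v.1 v.2 / s - 1)^2 * (v.1^(p-1) * Real.exp (-v.1/s)) * (v.2^(q-1) * Real.exp (-v.2/t))

noncomputable def phiS (p q : ℕ) (s : ℝ) : ℝ → ℝ :=
  fun z => min (1/((p:ℝ)+1)) ((1+z)/((p:ℝ)+q+1)) / s

lemma prodInt {f g : ℝ → ℝ} (hf : IntegrableOn f (Ioi 0)) (hg : IntegrableOn g (Ioi 0)) :
    IntegrableOn (fun v : ℝ × ℝ => f v.1 * g v.2) (Ioi (0:ℝ) ×ˢ Ioi (0:ℝ)) := by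
  rw [IntegrableOn, Measure.volume_eq_prod, ← Measure.prod_restrict]
  exact hf.mul_prod hg

lemma expEq {s : ℝ} (x : ℝ) : Real.exp (-x/s) = Real.exp (-(1/s)*x) := by
  congr 1; ring

-- pointwise identity for δ0
lemma hid0 (p q : ℕ) (hp : 1 ≤ p) (hq : 1 ≤ q) {s t : ℝ} :
    ∀ z ∈ Ioi (0:ℝ), ∀ v ∈ Ioi (0:ℝ),
      v * Gfun p q s t (fun v₁ _ => v₁ / ((p : ℝ) + 1)) (v, z * v)
      = z^(q-1) * ((1/((p:ℝ)+1)/s * v - 1)^2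
          * (v^(p+q-1) * Real.exp (-(1/s + z/t) * v))) := by
  intro z hz v hv
  simp only [Gfun]
  have e1 : v^(p+q-1) = v^(p-1) * v^(q-1) * v := by
    rw [← pow_add, ← pow_succ]; congr 1; omega
  have e2 : Real.exp (-(1/s + z/t) * v) = Real.exp (-v/s) * Real.exp (-(z*v)/t) := by
    rw [← Real.exp_add]; congr 1; ring
  rw [e1, e2, mul_pow]
  ring

-- pointwise identity for δS
lemma hidS (p q : ℕ) (hp : 1 ≤ p) (hq : 1 ≤ q) {s t : ℝ} :
    ∀ z ∈ Ioi (0:ℝ), ∀ v ∈ Ioi (0:ℝ),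
      v * Gfun p q s t
        (fun v₁ v₂ => min (v₁ / ((p : ℝ) + 1)) ((v₁ + v₂) / ((p : ℝ) + q + 1))) (v, z * v)
      = z^(q-1) * ((phiS p q s z * v - 1)^2
          * (v^(p+q-1) * Real.exp (-(1/s + z/t) * v))) := by
  intro z hz v hv
  simp only [Gfun, phiS]
  have hmin : min (v/((p:ℝ)+1)) ((v+z*v)/((p:ℝ)+q+1))
      = v * min (1/((p:ℝ)+1)) ((1+z)/((p:ℝ)+q+1)) := by
    rw [mul_min_of_nonneg _ _ (le_of_lt (mem_Ioi.mp hv))]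
    congr 1 <;> ring
  have e1 : v^(p+q-1) = v^(p-1) * v^(q-1) * v := by
    rw [← pow_add, ← pow_succ]; congr 1; omega
  have e2 : Real.exp (-(1/s + z/t) * v) = Real.exp (-v/s) * Real.exp (-(z*v)/t) := by
    rw [← Real.exp_add]; congr 1; ring
  rw [hmin, e1, e2, mul_pow]
  ring

lemma hk (k : ℕ) {u : ℝ} (hu : 0 < u) :
    IntegrableOn (fun x : ℝ => x^k * Real.exp (-x/u)) (Ioi 0) := by
  refine (gammaIntOn k (show (0:ℝ) < 1/u by positivity)).congr_fun (fun x _ => ?_)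
    measurableSet_Ioi
  rw [expEq]

lemma hkK (m : ℕ) (hm : 1 ≤ m) (a : ℝ) {u : ℝ} (hu : 0 < u) :
    IntegrableOn (fun v : ℝ => (a*v - 1)^2 * (v^(m-1) * Real.exp (-v/u))) (Ioi 0) := by
  refine (KIntOn m hm a (show (0:ℝ) < 1/u by positivity)).congr_fun (fun x _ => ?_)
    measurableSet_Ioi
  rw [expEq]

set_option maxHeartbeats 1000000 in
lemma i0 (p q : ℕ) (hp : 1 ≤ p) (hq : 1 ≤ q) {s t : ℝ} (hs : 0 < s) (ht : 0 < t) :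
    IntegrableOn (Gfun p q s t (fun v₁ _ => v₁ / ((p : ℝ) + 1)))
      (Ioi (0:ℝ) ×ˢ Ioi (0:ℝ)) := by
  have hf : IntegrableOn
      (fun x : ℝ => (x / ((p:ℝ)+1) / s - 1)^2 * (x^(p-1) * Real.exp (-x/s))) (Ioi 0) := by
    refine (hkK p hp (1/((p:ℝ)+1)/s) hs).congr_fun (fun x _ => ?_) measurableSet_Ioi
    ring_nf
  have hg : IntegrableOn (fun y : ℝ => y^(q-1) * Real.exp (-y/t)) (Ioi 0) := hk _ ht
  have hfg : IntegrableOn (fun v : ℝ × ℝ =>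
      ((v.1 / ((p:ℝ)+1) / s - 1)^2 * (v.1^(p-1) * Real.exp (-v.1/s)))
        * (v.2^(q-1) * Real.exp (-v.2/t))) (Ioi (0:ℝ) ×ˢ Ioi (0:ℝ)) := by
    apply prodInt hf hg
  refine hfg.congr_fun (fun v hv => ?_) (measurableSet_Ioi.prod measurableSet_Ioi)
  simp only [Gfun]

set_option maxHeartbeats 1000000 in
lemma i1 (p q : ℕ) (hp : 1 ≤ p) (hq : 1 ≤ q) {s t : ℝ} (hs : 0 < s) (ht : 0 < t) :
    IntegrableOn (Gfun p q s t (fun v₁ v₂ => (v₁ + v₂) / ((p : ℝ) + q + 1)))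
      (Ioi (0:ℝ) ×ˢ Ioi (0:ℝ)) := by
  set c : ℝ := 1/((p:ℝ)+q+1)/s with hc
  have big : IntegrableOn (fun v : ℝ × ℝ =>
      c^2 * ((v.1^(p+1) * Real.exp (-v.1/s)) * (v.2^(q-1) * Real.exp (-v.2/t)))
      + 2*c^2 * ((v.1^p * Real.exp (-v.1/s)) * (v.2^q * Real.exp (-v.2/t)))
      + c^2 * ((v.1^(p-1) * Real.exp (-v.1/s)) * (v.2^(q+1) * Real.exp (-v.2/t)))
      + (-(2*c)) * ((v.1^p * Real.exp (-v.1/s)) * (v.2^(q-1) * Real.exp (-v.2/t)))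
      + (-(2*c)) * ((v.1^(p-1) * Real.exp (-v.1/s)) * (v.2^q * Real.exp (-v.2/t)))
      + (v.1^(p-1) * Real.exp (-v.1/s)) * (v.2^(q-1) * Real.exp (-v.2/t)))
      (Ioi (0:ℝ) ×ˢ Ioi (0:ℝ)) := by
    have j1 : IntegrableOn (fun v : ℝ × ℝ =>
        c^2 * ((v.1^(p+1) * Real.exp (-v.1/s)) * (v.2^(q-1) * Real.exp (-v.2/t))))
        (Ioi (0:ℝ) ×ˢ Ioi (0:ℝ)) := by apply (prodInt (hk (p+1) hs) (hk (q-1) ht)).const_mul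
    have j2 : IntegrableOn (fun v : ℝ × ℝ =>
        2*c^2 * ((v.1^p * Real.exp (-v.1/s)) * (v.2^q * Real.exp (-v.2/t))))
        (Ioi (0:ℝ) ×ˢ Ioi (0:ℝ)) := by apply (prodInt (hk (p) hs) (hk (q) ht)).const_mul
    have j3 : IntegrableOn (fun v : ℝ × ℝ =>
        c^2 * ((v.1^(p-1) * Real.exp (-v.1/s)) * (v.2^(q+1) * Real.exp (-v.2/t))))
        (Ioi (0:ℝ) ×ˢ Ioi (0:ℝ)) := by apply (prodInt (hk (p-1) hs) (hk (q+1) ht)).const_mul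
    have j4 : IntegrableOn (fun v : ℝ × ℝ =>
        (-(2*c)) * ((v.1^p * Real.exp (-v.1/s)) * (v.2^(q-1) * Real.exp (-v.2/t))))
        (Ioi (0:ℝ) ×ˢ Ioi (0:ℝ)) := by apply (prodInt (hk (p) hs) (hk (q-1) ht)).const_mul
    have j5 : IntegrableOn (fun v : ℝ × ℝ =>
        (-(2*c)) * ((v.1^(p-1) * Real.exp (-v.1/s)) * (v.2^q * Real.exp (-v.2/t))))
        (Ioi (0:ℝ) ×ˢ Ioi (0:ℝ)) := by apply (prodInt (hk (p-1) hs) (hk (q) ht)).const_mul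
    have j6 : IntegrableOn (fun v : ℝ × ℝ =>
        (v.1^(p-1) * Real.exp (-v.1/s)) * (v.2^(q-1) * Real.exp (-v.2/t)))
        (Ioi (0:ℝ) ×ˢ Ioi (0:ℝ)) := by apply prodInt (hk (p-1) hs) (hk (q-1) ht)
    exact ((((j1.add j2).add j3).add j4).add j5).add j6
  refine big.congr_fun (fun v hv => ?_) (measurableSet_Ioi.prod measurableSet_Ioi)
  simp only [Gfun]
  have e1 : v.1^(p+1) = v.1^(p-1) * v.1^2 := by rw [← pow_add]; congr 1; omega
  have e2 : v.1^p = v.1^(p-1) * v.1 := by rw [← pow_succ]; congr 1; omega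
  have e3 : v.2^(q+1) = v.2^(q-1) * v.2^2 := by rw [← pow_add]; congr 1; omega
  have e4 : v.2^q = v.2^(q-1) * v.2 := by rw [← pow_succ]; congr 1; omega
  rw [e1, e2, e3, e4, hc]
  ring

set_option maxHeartbeats 1000000 in
lemma iS (p q : ℕ) (hp : 1 ≤ p) (hq : 1 ≤ q) {s t : ℝ} (hs : 0 < s) (ht : 0 < t) :
    IntegrableOn (Gfun p q s t
      (fun v₁ v₂ => min (v₁ / ((p : ℝ) + 1)) ((v₁ + v₂) / ((p : ℝ) + q + 1))))
      (Ioi (0:ℝ) ×ˢ Ioi (0:ℝ)) := by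
  have hmeas : AEStronglyMeasurable (Gfun p q s t
      (fun v₁ v₂ => min (v₁ / ((p : ℝ) + 1)) ((v₁ + v₂) / ((p : ℝ) + q + 1))))
      (volume.restrict (Ioi (0:ℝ) ×ˢ Ioi (0:ℝ))) := by
    apply Continuous.aestronglyMeasurable
    unfold Gfun
    fun_prop
  refine Integrable.mono' ((i0 p q hp hq hs ht).add (i1 p q hp hq hs ht)) hmeas ?_
  rw [ae_restrict_iff' (measurableSet_Ioi.prod measurableSet_Ioi)]
  refine Filter.Eventually.of_forall (fun v hv => ?_)
  obtain ⟨hv1, hv2⟩ := hv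
  have hv1' := mem_Ioi.mp hv1
  have hv2' := mem_Ioi.mp hv2
  have hw1 : (0:ℝ) ≤ v.1^(p-1) * Real.exp (-v.1/s) :=
    mul_nonneg (pow_nonneg hv1'.le _) (Real.exp_pos _).le
  have hw2 : (0:ℝ) ≤ v.2^(q-1) * Real.exp (-v.2/t) :=
    mul_nonneg (pow_nonneg hv2'.le _) (Real.exp_pos _).le
  have hG1 : 0 ≤ Gfun p q s t (fun v₁ v₂ => (v₁ + v₂) / ((p : ℝ) + q + 1)) v := by
    simp only [Gfun]
    positivity
  have hG0 : 0 ≤ Gfun p q s t (fun v₁ _ => v₁ / ((p : ℝ) + 1)) v := by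
    simp only [Gfun]
    positivity
  simp only [Gfun, Pi.add_apply]
  rw [Real.norm_eq_abs, abs_of_nonneg (by positivity)]
  rcases le_total (v.1 / ((p : ℝ) + 1)) ((v.1 + v.2) / ((p : ℝ) + q + 1)) with h | h
  · rw [min_eq_left h]
    simp only [Gfun] at hG1
    nlinarith
  · rw [min_eq_right h]
    simp only [Gfun] at hG0
    nlinarith

lemma ptLe (p q : ℕ) (hp : 2 ≤ p) (hq : 2 ≤ q) {s t : ℝ} (hs : 0 < s) (hst : s ≤ t)
    {z : ℝ} (hz : 0 < z) :
    z^(q-1) * ∫ v in Ioi (0:ℝ),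
        (phiS p q s z * v - 1)^2 * (v^(p+q-1) * Real.exp (-(1/s + z/t) * v))
    ≤ z^(q-1) * ∫ v in Ioi (0:ℝ),
        ((1/((p:ℝ)+1)/s) * v - 1)^2 * (v^(p+q-1) * Real.exp (-(1/s + z/t) * v)) := by
  have ht : 0 < t := lt_of_lt_of_le hs hst
  have hl : (0:ℝ) < 1/s + z/t := by positivity
  refine mul_le_mul_of_nonneg_left ?_ (pow_nonneg hz.le _)
  rcases le_or_gt (1/((p:ℝ)+1)) ((1+z)/((p:ℝ)+q+1)) with h | h
  · have e : phiS p q s z = 1/((p:ℝ)+1)/s := by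
      simp only [phiS]; rw [min_eq_left h]
    rw [e]
  · have hba : phiS p q s z ≤ 1/((p:ℝ)+1)/s := by
      simp only [phiS]; rw [min_eq_right h.le]
      gcongr
    have hb : (1/s + z/t)/(((p+q:ℕ):ℝ)+1) ≤ phiS p q s z := by
      simp only [phiS]; rw [min_eq_right h.le]
      push_cast
      have h1 : z/t ≤ z/s := by gcongr
      have h2 : 1/s + z/t ≤ (1+z)/s := by rw [add_div]; linarith
      calc (1/s + z/t)/((p:ℝ)+q+1) ≤ ((1+z)/s)/((p:ℝ)+q+1) := by gcongr
        _ = (1+z)/((p:ℝ)+q+1)/s := by rw [div_div, div_div, mul_comm]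
    exact Kle (p+q) (by omega) hl hba hb

lemma ptLt (p q : ℕ) (hp : 2 ≤ p) (hq : 2 ≤ q)
    {z : ℝ} (hz : 0 < z) (hz2 : z < (q:ℝ)/((p:ℝ)+1)) :
    z^(q-1) * ∫ v in Ioi (0:ℝ),
        (phiS p q 1 z * v - 1)^2 * (v^(p+q-1) * Real.exp (-(1/1 + z/1) * v))
    < z^(q-1) * ∫ v in Ioi (0:ℝ),
        ((1/((p:ℝ)+1)/1) * v - 1)^2 * (v^(p+q-1) * Real.exp (-(1/1 + z/1) * v)) := by
  have hl : (0:ℝ) < 1/1 + z/1 := by positivity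
  refine mul_lt_mul_of_pos_left ?_ (pow_pos hz _)
  have h : (1+z)/((p:ℝ)+q+1) < 1/((p:ℝ)+1) := by
    rw [div_lt_div_iff₀ (by positivity) (by positivity)]
    rw [lt_div_iff₀ (by positivity : (0:ℝ) < (p:ℝ)+1)] at hz2
    nlinarith
  have hba : phiS p q 1 z < 1/((p:ℝ)+1)/1 := by
    simp only [phiS]; rw [min_eq_right h.le]
    simpa using h
  have hb : (1/1 + z/1)/(((p+q:ℕ):ℝ)+1) ≤ phiS p q 1 z := by
    simp only [phiS]; rw [min_eq_right h.le]
    push_cast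
    apply le_of_eq
    ring
  exact Klt (p+q) (by omega) hl hba hb

lemma coreLe (p q : ℕ) (hp : 2 ≤ p) (hq : 2 ≤ q) {s t : ℝ} (hs : 0 < s) (hst : s ≤ t) :
    (∫ v in Ioi (0:ℝ) ×ˢ Ioi (0:ℝ), Gfun p q s t
      (fun v₁ v₂ => min (v₁ / ((p : ℝ) + 1)) ((v₁ + v₂) / ((p : ℝ) + q + 1))) v)
    ≤ ∫ v in Ioi (0:ℝ) ×ˢ Ioi (0:ℝ), Gfun p q s t (fun v₁ _ => v₁ / ((p : ℝ) + 1)) v := by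
  have hp1 : 1 ≤ p := by omega
  have hq1 : 1 ≤ q := by omega
  have ht : 0 < t := lt_of_lt_of_le hs hst
  obtain ⟨eq0, int0⟩ := red p q hp1 hq1 (fun _ => 1/((p:ℝ)+1)/s) _
    (i0 p q hp1 hq1 hs ht) (hid0 p q hp1 hq1)
  obtain ⟨eqS, intS⟩ := red p q hp1 hq1 (phiS p q s) _
    (iS p q hp1 hq1 hs ht) (hidS p q hp1 hq1)
  rw [eq0, eqS]
  exact setIntegral_mono_on intS int0 measurableSet_Ioi
    (fun z hz => ptLe p q hp hq hs hst (mem_Ioi.mp hz))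

lemma coreLt (p q : ℕ) (hp : 2 ≤ p) (hq : 2 ≤ q) :
    (∫ v in Ioi (0:ℝ) ×ˢ Ioi (0:ℝ), Gfun p q 1 1
      (fun v₁ v₂ => min (v₁ / ((p : ℝ) + 1)) ((v₁ + v₂) / ((p : ℝ) + q + 1))) v)
    < ∫ v in Ioi (0:ℝ) ×ˢ Ioi (0:ℝ), Gfun p q 1 1 (fun v₁ _ => v₁ / ((p : ℝ) + 1)) v := by
  have hp1 : 1 ≤ p := by omega
  have hq1 : 1 ≤ q := by omega
  obtain ⟨eq0, int0⟩ := red p q hp1 hq1 (fun _ => 1/((p:ℝ)+1)/1) _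
    (i0 p q hp1 hq1 one_pos one_pos) (hid0 p q hp1 hq1)
  obtain ⟨eqS, intS⟩ := red p q hp1 hq1 (phiS p q 1) _
    (iS p q hp1 hq1 one_pos one_pos) (hidS p q hp1 hq1)
  rw [eq0, eqS]
  set F0 : ℝ → ℝ := fun z => z^(q-1) * ∫ v in Ioi (0:ℝ),
      ((fun _ : ℝ => 1/((p:ℝ)+1)/1) z * v - 1)^2
        * (v^(p+q-1) * Real.exp (-(1/1 + z/1) * v)) with hF0
  set FS : ℝ → ℝ := fun z => z^(q-1) * ∫ v in Ioi (0:ℝ),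
      (phiS p q 1 z * v - 1)^2 * (v^(p+q-1) * Real.exp (-(1/1 + z/1) * v)) with hFS
  have hsub : (0:ℝ) < ∫ z in Ioi (0:ℝ), (F0 z - FS z) := by
    rw [setIntegral_pos_iff_support_of_nonneg_ae]
    · refine lt_of_lt_of_le ?_ (measure_mono (?_ :
        Ioo (0:ℝ) ((q:ℝ)/((p:ℝ)+1)) ⊆ Function.support (fun z => F0 z - FS z) ∩ Ioi 0))
      · rw [Real.volume_Ioo, sub_zero]
        exact ENNReal.ofReal_pos.mpr (by positivity)
      · intro z hz
        refine ⟨?_, hz.1⟩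
        have hlt : FS z < F0 z := by
          simp only [hF0, hFS]
          exact ptLt p q hp hq hz.1 hz.2
        rw [Function.mem_support]
        exact (sub_pos.mpr hlt).ne'
    · filter_upwards [self_mem_ae_restrict (measurableSet_Ioi (a := (0:ℝ)))] with z hz
      have hle : FS z ≤ F0 z := by
        simp only [hF0, hFS]
        exact ptLe p q hp hq one_pos le_rfl (mem_Ioi.mp hz)
      simpa using sub_nonneg.2 hle
    · exact int0.sub intS
  rw [integral_sub int0 intS] at hsub
  linarith

/-- Stein-type domination for σ₁: under quadratic loss, δ_S = min{V₁/(p+1), (V₁+V₂)/(p+q+1)}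
dominates the BAEE δ₀ = V₁/(p+1) whenever σ₁ ≤ σ₂, strictly for some parameter values. -/
theorem stmt15 (p q : ℕ) (hp : 2 ≤ p) (hq : 2 ≤ q)
    (risk : ℝ → ℝ → (ℝ → ℝ → ℝ) → ℝ)
    (hrisk : ∀ σ₁ σ₂ : ℝ, ∀ δ : ℝ → ℝ → ℝ, risk σ₁ σ₂ δ =
      ∫ v in Set.Ioi (0 : ℝ) ×ˢ Set.Ioi (0 : ℝ),
        (δ v.1 v.2 / σ₁ - 1) ^ 2 *
          (v.1 ^ (p - 1) * Real.exp (-v.1 / σ₁) / (σ₁ ^ p * (Nat.factorial (p - 1)))) *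
          (v.2 ^ (q - 1) * Real.exp (-v.2 / σ₂) / (σ₂ ^ q * (Nat.factorial (q - 1))))) :
    (∀ σ₁ σ₂ : ℝ, 0 < σ₁ → σ₁ ≤ σ₂ →
      risk σ₁ σ₂ (fun v₁ v₂ => min (v₁ / ((p : ℝ) + 1)) ((v₁ + v₂) / ((p : ℝ) + q + 1))) ≤
        risk σ₁ σ₂ (fun v₁ v₂ => v₁ / ((p : ℝ) + 1))) ∧
    (∃ σ₁ σ₂ : ℝ, 0 < σ₁ ∧ σ₁ ≤ σ₂ ∧
      risk σ₁ σ₂ (fun v₁ v₂ => min (v₁ / ((p : ℝ) + 1)) ((v₁ + v₂) / ((p : ℝ) + q + 1))) <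
        risk σ₁ σ₂ (fun v₁ v₂ => v₁ / ((p : ℝ) + 1))) := by
  have c1 : (0:ℝ) < (p-1).factorial := by exact_mod_cast (p-1).factorial_pos
  have c2 : (0:ℝ) < (q-1).factorial := by exact_mod_cast (q-1).factorial_pos
  have riskEq : ∀ σ₁ σ₂ : ℝ, ∀ δ : ℝ → ℝ → ℝ, risk σ₁ σ₂ δ =
      ((σ₁^p * ((p-1).factorial:ℝ)) * (σ₂^q * ((q-1).factorial:ℝ)))⁻¹ *
        ∫ v in Ioi (0:ℝ) ×ˢ Ioi (0:ℝ), Gfun p q σ₁ σ₂ δ v := by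
    intro σ₁ σ₂ δ
    rw [hrisk, ← integral_const_mul]
    refine setIntegral_congr_fun (measurableSet_Ioi.prod measurableSet_Ioi) (fun v _ => ?_)
    simp only [Gfun]
    ring
  constructor
  · intro σ₁ σ₂ h1 h12
    have h2 : 0 < σ₂ := lt_of_lt_of_le h1 h12
    rw [riskEq, riskEq]
    exact mul_le_mul_of_nonneg_left (coreLe p q hp hq h1 h12)
      (inv_nonneg.2 (by positivity))
  · refine ⟨1, 1, one_pos, le_rfl, ?_⟩
    rw [riskEq, riskEq]
    refine mul_lt_mul_of_pos_left (coreLt p q hp hq) ?_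
    rw [one_pow, one_pow]
    positivity
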